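/- (Straightening lemma) Let p : E → B be a fibration in a tribe, and let f : A → B and g : A → E be maps such that p∘g is homotopic to f. Then there exists a map g' : A → E homotopic to g with p∘g' = f. -/

import Mathlib

open CategoryTheory CategoryTheory.Limits

universe w v u v' u' v'' u''

/-- A *clan* structure on a category `E`: a terminal object together with a class of
maps (the *fibrations*) containing the isomorphisms, closed under composition and
base changes (every fibration is carrable and any pullback of a fibration is a
fibration), and containing every map to the terminal object. -/
structure Clan (E : Type u) [Category.{v} E] where
  fib : MorphismProperty E
  one : E
  one_isTerminal : IsTerminal one
  fib_of_isIso : ∀ ⦃A B : E⦄ (f : A ⟶ B), IsIso f → fib f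
  fib_comp : ∀ ⦃A B C : E⦄ {f : A ⟶ B} {g : B ⟶ C}, fib f → fib g → fib (f ≫ g)
  carrable : ∀ ⦃A B X : E⦄ (f : A ⟶ B) ⦃p : X ⟶ B⦄, fib p →
    ∃ (P : E) (p₁ : P ⟶ A) (p₂ : P ⟶ X), IsPullback p₁ p₂ f p
  fib_baseChange : ∀ ⦃P A X B : E⦄ {p₁ : P ⟶ A} {p₂ : P ⟶ X} {f : A ⟶ B} {p : X ⟶ B},
    IsPullback p₁ p₂ f p → fib p → fib p₁
  fib_toOne : ∀ X : E, fib (one_isTerminal.from X)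

/-- A *morphism of clans* is a functor taking fibrations to fibrations, preserving
base changes of fibrations, and taking the terminal object to a terminal object. -/
structure IsClanMorphism {E : Type u} {E' : Type u'} [Category.{v} E] [Category.{v'} E']
    (C : Clan E) (D : Clan E') (F : E ⥤ E') : Prop where
  map_fib : ∀ ⦃A B : E⦄ (f : A ⟶ B), C.fib f → D.fib (F.map f)
  map_isPullback : ∀ ⦃P A X B : E⦄ {p₁ : P ⟶ A} {p₂ : P ⟶ X} {f : A ⟶ B} {p : X ⟶ B},
    IsPullback p₁ p₂ f p → C.fib p →
      IsPullback (F.map p₁) (F.map p₂) (F.map f) (F.map p)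
  preserves_terminal : Nonempty (IsTerminal (F.obj C.one))

/-- The local category `E(A)`: the full subcategory of `Over A` spanned by the
fibrations `X ↠ A`. -/
abbrev ClanSlice {E : Type u} [Category.{v} E] (C : Clan E) (A : E) :=
  ObjectProperty.FullSubcategory (fun X : Over A => C.fib X.hom)

/-- The underlying morphism of `Over A` of a morphism of `ClanSlice C A`. -/
def ClanSlice.homOf {E : Type u} [Category.{v} E] {C : Clan E} {A : E}
    {X Y : ClanSlice C A} (u : X ⟶ Y) : X.obj ⟶ Y.obj := u.hom

/-- A map in a clan is *anodyne* if it has the left lifting property with respect to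
every fibration. -/
def Anodyne {E : Type u} [Category.{v} E] (C : Clan E) : MorphismProperty E :=
  fun _ _ u => ∀ ⦃X Y : E⦄ (f : X ⟶ Y), C.fib f → HasLiftingProperty u f

/-- A *tribe* is a clan in which every map factors as an anodyne map followed by a
fibration, and every base change of an anodyne map along a fibration is anodyne. -/
structure Tribe (E : Type u) [Category.{v} E] extends Clan E where
  exists_fact : ∀ ⦃A B : E⦄ (f : A ⟶ B), ∃ (Z : E) (u : A ⟶ Z) (p : Z ⟶ B),
    Anodyne toClan u ∧ fib p ∧ u ≫ p = f
  anodyne_baseChange : ∀ ⦃P A X B : E⦄ {p₁ : P ⟶ A} {p₂ : P ⟶ X} {f : A ⟶ B} {u : X ⟶ B},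
    IsPullback p₁ p₂ f u → fib f → Anodyne toClan u → Anodyne toClan p₁

/-- A *path object* for `B`: a factorization of the diagonal `B ⟶ B × B` as an
anodyne map `σ` followed by a fibration `(∂₀, ∂₁)`.  The product `B × B` is
witnessed by a pullback square over the terminal object. -/
structure PathObj {E : Type u} [Category.{v} E] (T : Tribe E) (B : E) where
  P : E
  σ : B ⟶ P
  d₀ : P ⟶ B
  d₁ : P ⟶ B
  σ_d₀ : σ ≫ d₀ = 𝟙 B
  σ_d₁ : σ ≫ d₁ = 𝟙 B
  anodyne_σ : Anodyne T.toClan σ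
  BB : E
  pr₁ : BB ⟶ B
  pr₂ : BB ⟶ B
  isProd : IsPullback pr₁ pr₂ (T.one_isTerminal.from B) (T.one_isTerminal.from B)
  pair : P ⟶ BB
  pair_pr₁ : pair ≫ pr₁ = d₀
  pair_pr₂ : pair ≫ pr₂ = d₁
  fib_pair : T.fib pair

/-- Two maps `f g : A ⟶ B` in a tribe are *homotopic* if there are a path object for
`B` and a homotopy `H : A ⟶ PB` with `∂₀ ∘ H = f` and `∂₁ ∘ H = g`. -/
def Homotopic {E : Type u} [Category.{v} E] (T : Tribe E) {A B : E} (f g : A ⟶ B) : Prop :=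
  ∃ (Q : PathObj T B) (H : A ⟶ Q.P), H ≫ Q.d₀ = f ∧ H ≫ Q.d₁ = g

/-- A map is a *homotopy equivalence* if it admits a homotopy inverse. -/
def IsHomotopyEquiv {E : Type u} [Category.{v} E] (T : Tribe E) {X Y : E} (f : X ⟶ Y) : Prop :=
  ∃ g : Y ⟶ X, Homotopic T (f ≫ g) (𝟙 X) ∧ Homotopic T (g ≫ f) (𝟙 Y)

/-- The local category `E(A)` of a tribe: the full subcategory of `Over A` spanned
by the fibrations `X ↠ A`. -/
abbrev TribeSlice {E : Type u} [Category.{v} E] (T : Tribe E) (A : E) :=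
  ObjectProperty.FullSubcategory (fun X : Over A => T.fib X.hom)

/-- The underlying morphism of `Over A` of a morphism of `TribeSlice T A`. -/
def TribeSlice.homOf {E : Type u} [Category.{v} E] {T : Tribe E} {A : E}
    {X Y : TribeSlice T A} (u : X ⟶ Y) : X.obj ⟶ Y.obj := u.hom

/-- A *morphism of tribes* is a morphism of clans that moreover takes anodyne maps
to anodyne maps. -/
structure IsTribeMorphism {E : Type u} {E' : Type u'} [Category.{v} E] [Category.{v'} E']
    (T : Tribe E) (T' : Tribe E') (F : E ⥤ E')
    extends IsClanMorphism T.toClan T'.toClan F : Prop where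
  map_anodyne : ∀ ⦃A B : E⦄ (u : A ⟶ B), Anodyne T.toClan u → Anodyne T'.toClan (F.map u)

/-- The homotopy relation, as a `HomRel`; the homotopy category `Ho(E)` is the
quotient of `E` by this congruence. -/
def HoRel {E : Type u} [Category.{v} E] (T : Tribe E) : HomRel E :=
  fun {_ _} f g => Homotopic T f g

/-- Straightening lemma: If `p : X ⟶ B` is a fibration in a tribe and
`g : A ⟶ X`, `f : A ⟶ B` are maps with `p ∘ g` homotopic to `f`, then there is a map
`g'` homotopic to `g` with `p ∘ g' = f`. -/
theorem straightening {E : Type u} [Category.{v} E] (T : Tribe E)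
    {A B X : E} (p : X ⟶ B) (hp : T.fib p) (f : A ⟶ B) (g : A ⟶ X)
    (h : Homotopic T (g ≫ p) f) :
    ∃ g' : A ⟶ X, Homotopic T g g' ∧ g' ≫ p = f := by
  obtain ⟨Q, H, hH0, hH1⟩ := h
  have fibpr₁ : T.fib Q.pr₁ := T.fib_baseChange Q.isProd (T.fib_toOne B)
  have fibpr₂ : T.fib Q.pr₂ := T.fib_baseChange Q.isProd.flip (T.fib_toOne B)
  have fibd₀ : T.fib Q.d₀ := Q.pair_pr₁ ▸ T.fib_comp Q.fib_pair fibpr₁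
  have fibd₁ : T.fib Q.d₁ := Q.pair_pr₂ ▸ T.fib_comp Q.fib_pair fibpr₂
  obtain ⟨Z, z₁, z₂, hZ⟩ := T.carrable p fibd₀
  have fibz₂ : T.fib z₂ := T.fib_baseChange hZ.flip hp
  -- the map j : X ⟶ Z induced by (𝟙 X, p ≫ σ)
  have hjw : (𝟙 X) ≫ p = (p ≫ Q.σ) ≫ Q.d₀ := by
    rw [Category.id_comp, Category.assoc, Q.σ_d₀, Category.comp_id]
  set j : X ⟶ Z := hZ.lift (𝟙 X) (p ≫ Q.σ) hjw with hj
  have hjz₁ : j ≫ z₁ = 𝟙 X := hZ.lift_fst _ _ _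
  have hjz₂ : j ≫ z₂ = p ≫ Q.σ := hZ.lift_snd _ _ _
  -- j is a base change of σ along the fibration z₂, hence anodyne
  have hjp : IsPullback j p z₂ Q.σ := by
    refine IsPullback.of_right ?_ hjz₂ hZ
    rw [hjz₁, Q.σ_d₀]
    exact IsPullback.of_horiz_isIso ⟨by simp⟩
  have anj : Anodyne T.toClan j := T.anodyne_baseChange hjp fibz₂ Q.anodyne_σ
  -- the retraction k : Z ⟶ X over B
  haveI : HasLiftingProperty j p := anj p hp
  have sq : CommSq (𝟙 X) j p (z₂ ≫ Q.d₁) := by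
    constructor
    rw [Category.id_comp, ← Category.assoc, hjz₂, Category.assoc, Q.σ_d₁, Category.comp_id]
  set k : Z ⟶ X := sq.lift with hk
  have hjk : j ≫ k = 𝟙 X := sq.fac_left
  have hkp : k ≫ p = z₂ ≫ Q.d₁ := sq.fac_right
  -- the map w : A ⟶ Z induced by (g, H)
  set w : A ⟶ Z := hZ.lift g H hH0.symm with hw
  have hwz₁ : w ≫ z₁ = g := hZ.lift_fst _ _ _
  have hwz₂ : w ≫ z₂ = H := hZ.lift_snd _ _ _
  refine ⟨w ≫ k, ?_, by rw [Category.assoc, hkp, ← Category.assoc, hwz₂, hH1]⟩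
  -- construct a path object for X
  obtain ⟨XX, q₁, q₂, hXX⟩ := T.carrable (T.one_isTerminal.from X) (T.fib_toOne X)
  set δ : X ⟶ XX := hXX.lift (𝟙 X) (𝟙 X) (T.one_isTerminal.hom_ext _ _) with hδ
  obtain ⟨PX, s, pr, hs_an, hpr_fib, hfac⟩ := T.exists_fact δ
  have hsq₁ : s ≫ pr ≫ q₁ = 𝟙 X := by
    rw [← Category.assoc, hfac]; exact hXX.lift_fst _ _ _
  have hsq₂ : s ≫ pr ≫ q₂ = 𝟙 X := by
    rw [← Category.assoc, hfac]; exact hXX.lift_snd _ _ _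
  set R : PathObj T X :=
    { P := PX, σ := s, d₀ := pr ≫ q₁, d₁ := pr ≫ q₂,
      σ_d₀ := hsq₁, σ_d₁ := hsq₂, anodyne_σ := hs_an,
      BB := XX, pr₁ := q₁, pr₂ := q₂, isProd := hXX,
      pair := pr, pair_pr₁ := rfl, pair_pr₂ := rfl, fib_pair := hpr_fib } with hR
  -- the map (z₁, k) : Z ⟶ XX
  set m : Z ⟶ XX := hXX.lift z₁ k (T.one_isTerminal.hom_ext _ _) with hm
  have hmq₁ : m ≫ q₁ = z₁ := hXX.lift_fst _ _ _
  have hmq₂ : m ≫ q₂ = k := hXX.lift_snd _ _ _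
  -- lift the homotopy
  haveI : HasLiftingProperty j pr := anj pr hpr_fib
  have sq2 : CommSq s j pr m := by
    constructor
    apply hXX.hom_ext
    · simp only [Category.assoc, hsq₁, hmq₁, hjz₁]
    · simp only [Category.assoc, hsq₂, hmq₂, hjk]
  refine ⟨R, w ≫ sq2.lift, ?_, ?_⟩
  · show (w ≫ sq2.lift) ≫ pr ≫ q₁ = g
    rw [Category.assoc, ← Category.assoc sq2.lift, sq2.fac_right]
    simp only [Category.assoc, hmq₁, hwz₁]
  · show (w ≫ sq2.lift) ≫ pr ≫ q₂ = w ≫ k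
    rw [Category.assoc, ← Category.assoc sq2.lift, sq2.fac_right]
    simp only [Category.assoc, hmq₂]
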